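/- Let d ≥ 3 and let (G,p) be a cs d-framework that is infinitesimally rigid in ℝ^d and whose point set p(V(G)) affinely spans ℝ^d. If f_1(G) − d·f_0(G) + C(d+1,2) = C(d,2) − d, then every stress ω on (G,p) is symmetric, i.e., ω_e = ω_{−e} for every edge e of G. -/

import Mathlib

open Finset
open scoped Classical

noncomputable section

/-- A finite graph: a finite vertex set together with a finite set of edges,
where each edge is (intended to be) a 2-element subset of the vertex set. -/
structure FinGraph (ι : Type) where
  verts : Finset ι
  edges : Finset (Finset ι)

/-- Every edge is a 2-element subset of the vertex set. -/
def FinGraph.Good {ι : Type} (G : FinGraph ι) : Prop :=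
  ∀ e ∈ G.edges, e ⊆ G.verts ∧ e.card = 2

/-- The standard inner (dot) product on `ℝ^d`. -/
def dotR {d : ℕ} (x y : Fin d → ℝ) : ℝ := ∑ i, x i * y i

/-- An infinitesimal motion of the framework `(G, p)`. -/
def IsMotion {ι : Type} {d : ℕ} (G : FinGraph ι) (p m : ι → Fin d → ℝ) : Prop :=
  ∀ e ∈ G.edges, ∀ u ∈ e, ∀ v ∈ e, dotR (p u - p v) (m u - m v) = 0

/-- The framework `(G, p)` is infinitesimally rigid in `ℝ^d`: every infinitesimal
motion is the restriction of a motion `x ↦ A x + b` of `ℝ^d` with `A` skew-symmetric. -/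
def IsInfRigid {ι : Type} (d : ℕ) (G : FinGraph ι) (p : ι → Fin d → ℝ) : Prop :=
  ∀ m : ι → Fin d → ℝ, IsMotion G p m →
    ∃ (A : Matrix (Fin d) (Fin d) ℝ) (b : Fin d → ℝ),
      A.transpose = -A ∧ ∀ v ∈ G.verts, m v = A.mulVec (p v) + b

/-- A stress on the framework `(G, p)`. -/
def IsStress {ι : Type} {d : ℕ} (G : FinGraph ι) (p : ι → Fin d → ℝ)
    (ω : Finset ι → ℝ) : Prop :=
  ∀ v ∈ G.verts,
    (∑ e ∈ G.edges.filter (fun e => v ∈ e), ∑ u ∈ e.erase v, ω e • (p v - p u)) = 0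

/-- A centrally symmetric framework with free involution `ν` satisfying `p (ν v) = -(p v)`. -/
def IsCSFramework {ι : Type} {d : ℕ} (G : FinGraph ι) (p : ι → Fin d → ℝ) (ν : ι → ι) : Prop :=
  (∀ v ∈ G.verts, ν (ν v) = v) ∧
  (∀ v ∈ G.verts, ν v ∈ G.verts) ∧
  (∀ v ∈ G.verts, ν v ≠ v) ∧
  (∀ e ∈ G.edges, e.image ν ∈ G.edges) ∧
  (∀ e ∈ G.edges, e.image ν ≠ e) ∧
  (∀ v ∈ G.verts, p (ν v) = -(p v))

/-- The convex body spanned by a finite point set. -/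
def polyBody {d : ℕ} (V : Finset (Fin d → ℝ)) : Set (Fin d → ℝ) :=
  convexHull ℝ (V : Set (Fin d → ℝ))

/-- `(f, c)` is a supporting functional for `conv V` exposing the face `F`. -/
def IsSupport {d : ℕ} (V : Finset (Fin d → ℝ)) (f : (Fin d → ℝ) →ₗ[ℝ] ℝ) (c : ℝ)
    (F : Set (Fin d → ℝ)) : Prop :=
  (∀ y ∈ polyBody V, f y ≤ c) ∧ F = {y ∈ polyBody V | f y = c}

/-- A proper face of the polytope `conv V`. -/
def IsProperFace {d : ℕ} (V : Finset (Fin d → ℝ)) (F : Set (Fin d → ℝ)) : Prop :=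
  (∃ f c, IsSupport V f c F) ∧ F ≠ polyBody V

/-- A simplicial `d`-polytope in `ℝ^d`, recorded by its vertex set `V`: the polytope is
`conv V`, it is `d`-dimensional, every element of `V` is a vertex, and every proper face
is a simplex (the convex hull of its affinely independent vertex set). -/
structure SPolytope (d : ℕ) where
  V : Finset (Fin d → ℝ)
  span_top : affineSpan ℝ (V : Set (Fin d → ℝ)) = ⊤
  extreme : ∀ v ∈ V, v ∉ convexHull ℝ ((V.erase v : Finset (Fin d → ℝ)) : Set (Fin d → ℝ))
  simplicial : ∀ F : Set (Fin d → ℝ), IsProperFace V F →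
    AffineIndependent ℝ
      (fun x : {y : Fin d → ℝ // y ∈ (V : Set (Fin d → ℝ)) ∩ F} => (x : Fin d → ℝ)) ∧
    F = convexHull ℝ ((V : Set (Fin d → ℝ)) ∩ F)

/-- `s` is a face of the boundary complex `∂P`. -/
def BFace {d : ℕ} (P : SPolytope d) (s : Finset (Fin d → ℝ)) : Prop :=
  s ⊆ P.V ∧ ∃ F : Set (Fin d → ℝ), IsProperFace P.V F ∧ (s : Set (Fin d → ℝ)) ⊆ F

/-- The number of vertices of `∂P`. -/
def f0 {d : ℕ} (P : SPolytope d) : ℕ := P.V.card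

/-- The edges of `∂P`. -/
def edgeFinset {d : ℕ} (P : SPolytope d) : Finset (Finset (Fin d → ℝ)) :=
  P.V.powerset.filter fun e => e.card = 2 ∧ BFace P e

/-- The number of edges of `∂P`. -/
def f1 {d : ℕ} (P : SPolytope d) : ℕ := (edgeFinset P).card

/-- `g₂(P) = f₁ - d f₀ + C(d+1, 2)`. -/
def g2 {d : ℕ} (P : SPolytope d) : ℤ :=
  (f1 P : ℤ) - (d : ℤ) * (f0 P : ℤ) + ((d + 1).choose 2 : ℤ)

/-- `P` is centrally symmetric. -/
def IsCS {d : ℕ} (P : SPolytope d) : Prop := ∀ v ∈ P.V, -v ∈ P.V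

/-- A missing face of `∂P`. -/
def IsMissingFace {d : ℕ} (P : SPolytope d) (σ : Finset (Fin d → ℝ)) : Prop :=
  σ ⊆ P.V ∧ ¬ BFace P σ ∧ ∀ τ ⊂ σ, BFace P τ

/-- `P` is prime: `∂P` has no missing facet, i.e. no missing face of cardinality `d`. -/
def IsPrimePoly {d : ℕ} (P : SPolytope d) : Prop :=
  ¬ ∃ σ : Finset (Fin d → ℝ), IsMissingFace P σ ∧ σ.card = d

/-- The graph (1-skeleton) of `∂P` as a framework graph. -/
def fullGraph {d : ℕ} (P : SPolytope d) : FinGraph (Fin d → ℝ) :=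
  ⟨P.V, edgeFinset P⟩

/-- The graph (1-skeleton) of the star of the face `τ` in `∂P`. -/
def starGraph {d : ℕ} (P : SPolytope d) (τ : Finset (Fin d → ℝ)) : FinGraph (Fin d → ℝ) :=
  ⟨P.V.filter fun v => BFace P (insert v τ),
   P.V.powerset.filter fun e => e.card = 2 ∧ BFace P (e ∪ τ)⟩

/-- Adjacency in the graph of `∂P`. -/
def Adj {d : ℕ} (P : SPolytope d) (u v : Fin d → ℝ) : Prop :=
  u ≠ v ∧ BFace P {u, v}

/-- `σ` is a face of the link of the face `τ` in `∂P`. -/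
def LinkFace {d : ℕ} (P : SPolytope d) (τ σ : Finset (Fin d → ℝ)) : Prop :=
  Disjoint σ τ ∧ BFace P (σ ∪ τ)

/-- `P` is a `d`-dimensional cross-polytope: its vertex set is `{±b₁, …, ±b_d}`
for some basis `b₁, …, b_d` of `ℝ^d`. -/
def IsCrossPolytope {d : ℕ} (P : SPolytope d) : Prop :=
  ∃ b : Fin d → (Fin d → ℝ), LinearIndependent ℝ b ∧
    (P.V : Set (Fin d → ℝ)) = Set.range b ∪ Set.range (fun i => -(b i))

/-- A facet of `P`: a proper face with `d` vertices. -/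
def IsFacet {d : ℕ} (P : SPolytope d) (F : Set (Fin d → ℝ)) : Prop :=
  IsProperFace P.V F ∧ ((P.V : Set (Fin d → ℝ)) ∩ F).ncard = d

/-- `x` lies beyond exactly one facet of `P`: it is strictly separated from `P` by the
affine hull of one facet `F`, and not separated from `P` by the affine hull of any
other facet. -/
def BeyondExactlyOne {d : ℕ} (P : SPolytope d) (x : Fin d → ℝ) : Prop :=
  ∃ F : Set (Fin d → ℝ), IsFacet P F ∧
    (∀ f c, IsSupport P.V f c F → c < f x) ∧
    (∀ F' : Set (Fin d → ℝ), IsFacet P F' → F' ≠ F →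
      ∀ f c, IsSupport P.V f c F' → f x < c)

/-- `P` is obtained from a `d`-dimensional cross-polytope by symmetric stacking: there is
a sequence of cs simplicial `d`-polytopes starting at a cross-polytope and ending at `P`,
each obtained from the previous one as `conv (P_k ∪ {v, -v})` for a point `v` lying
beyond exactly one facet of `P_k`. -/
def SymmetricStackingFrom {d : ℕ} (P : SPolytope d) : Prop :=
  ∃ (m : ℕ) (Q : Fin (m + 1) → SPolytope d),
    (∀ k, IsCS (Q k)) ∧
    IsCrossPolytope (Q 0) ∧
    Q (Fin.last m) = P ∧
    ∀ k : Fin m, ∃ v : Fin d → ℝ,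
      BeyondExactlyOne (Q (Fin.castSucc k)) v ∧
      polyBody (Q (Fin.succ k)).V =
        convexHull ℝ (polyBody (Q (Fin.castSucc k)).V ∪ {v, -v})

/-- `P` is a stacked `d`-polytope: obtained from a `d`-simplex by repeatedly adding a
point beyond exactly one facet. -/
def IsStacked {d : ℕ} (P : SPolytope d) : Prop :=
  ∃ (m : ℕ) (R : Fin (m + 1) → SPolytope d),
    (R 0).V.card = d + 1 ∧
    R (Fin.last m) = P ∧
    ∀ k : Fin m, ∃ v : Fin d → ℝ,
      BeyondExactlyOne (R (Fin.castSucc k)) v ∧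
      polyBody (R (Fin.succ k)).V =
        convexHull ℝ (polyBody (R (Fin.castSucc k)).V ∪ {v})

/-- Every `d` vertices of `P`, no two of which are antipodal, are affinely independent. -/
def GenPos {d : ℕ} (P : SPolytope d) : Prop :=
  ∀ S : Finset (Fin d → ℝ), S ⊆ P.V → S.card = d →
    (∀ x ∈ S, ∀ y ∈ S, x ≠ -y) →
    AffineIndependent ℝ (fun s : {x : Fin d → ℝ // x ∈ S} => (s : Fin d → ℝ))

/-- The graph of the cone `v₀ * S` over a simplicial complex `S` (a set of finsets):
the vertices of `S` together with `v₀`, and the edges of `S` together with all edges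
from `v₀` to vertices of `S`. -/
def coneGraph {d : ℕ} (P : SPolytope d) (v0 : Fin d → ℝ)
    (S : Set (Finset (Fin d → ℝ))) : FinGraph (Fin d → ℝ) :=
  ⟨insert v0 (P.V.filter fun u => ({u} : Finset (Fin d → ℝ)) ∈ S),
   (P.V.powerset.filter fun e => e.card = 2 ∧ e ∈ S) ∪
     (P.V.filter fun u => ({u} : Finset (Fin d → ℝ)) ∈ S).image
       fun u => ({v0, u} : Finset (Fin d → ℝ))⟩

/-! ### Auxiliary development for Statement 3 -/

section Stmt3Aux

variable {ι : Type} {d : ℕ}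

lemma dotR_zero_left (y : Fin d → ℝ) : dotR 0 y = 0 := by simp [dotR]

lemma dotR_zero_right (x : Fin d → ℝ) : dotR x 0 = 0 := by simp [dotR]

lemma dotR_neg_left (x y : Fin d → ℝ) : dotR (-x) y = - dotR x y := by
  simp [dotR, Finset.sum_neg_distrib]

lemma dotR_add_right (x y z : Fin d → ℝ) : dotR x (y + z) = dotR x y + dotR x z := by
  simp [dotR, mul_add, Finset.sum_add_distrib]

lemma dotR_sub_right (x y z : Fin d → ℝ) : dotR x (y - z) = dotR x y - dotR x z := by
  simp [dotR, mul_sub, Finset.sum_sub_distrib]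

lemma dotR_neg_neg (x y : Fin d → ℝ) : dotR (-x) (-y) = dotR x y := by
  simp [dotR]

lemma dotR_smul_right (c : ℝ) (x y : Fin d → ℝ) : dotR x (c • y) = c * dotR x y := by
  simp only [dotR, Finset.mul_sum, Pi.smul_apply, smul_eq_mul]
  exact Finset.sum_congr rfl fun i _ => by ring

lemma dotR_sum_left {α : Type*} (s : Finset α) (f : α → Fin d → ℝ) (y : Fin d → ℝ) :
    dotR (∑ i ∈ s, f i) y = ∑ i ∈ s, dotR (f i) y := by
  simp only [dotR, Finset.sum_apply, Finset.sum_mul]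
  exact Finset.sum_comm

/-- Orbit representatives for a free involution on a finset. -/
lemma exists_reps_aux {X : Type*} [DecidableEq X] (τ : X → X) (s : Finset X) :
    (∀ x ∈ s, τ (τ x) = x) → (∀ x ∈ s, τ x ≠ x) → (∀ x ∈ s, τ x ∈ s) →
      ∃ R : Finset X, R ⊆ s ∧ (∀ x ∈ s, (x ∈ R ↔ τ x ∉ R)) ∧ 2 * R.card = s.card := by
  induction s using Finset.strongInduction with
  | _ s ih =>
    intro hinv hfree hcl
    rcases s.eq_empty_or_nonempty with rfl | ⟨x, hx⟩
    · exact ⟨∅, by simp⟩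
    · have hτx : τ x ∈ s := hcl x hx
      have hτxx : τ x ≠ x := hfree x hx
      set s' := (s.erase x).erase (τ x) with hs'
      have hmem' : ∀ y, y ∈ s' ↔ y ∈ s ∧ y ≠ x ∧ y ≠ τ x := by
        intro y
        simp only [hs', Finset.mem_erase]
        tauto
      have hsub : s' ⊆ s := fun y hy => ((hmem' y).1 hy).1
      have hxns' : x ∉ s' := fun h => ((hmem' x).1 h).2.1 rfl
      have hτxns' : τ x ∉ s' := fun h => ((hmem' (τ x)).1 h).2.2 rfl
      have hss : s' ⊂ s := Finset.ssubset_iff_of_subset hsub |>.2 ⟨x, hx, hxns'⟩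
      obtain ⟨R', hR'sub, hR'iff, hR'card⟩ := ih s' hss
        (fun y hy => hinv y (hsub hy)) (fun y hy => hfree y (hsub hy))
        (fun y hy => by
          have hy' := (hmem' y).1 hy
          refine (hmem' (τ y)).2 ⟨hcl y hy'.1, ?_, ?_⟩
          · intro h; exact hy'.2.2 (by rw [← hinv y hy'.1, h])
          · intro h
            have := hinv y hy'.1
            rw [h] at this
            exact hy'.2.1 (by rw [← this, hinv x hx]))
      have hxnR' : x ∉ R' := fun h => hxns' (hR'sub h)
      have hτxnR' : τ x ∉ R' := fun h => hτxns' (hR'sub h)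
      refine ⟨insert x R', ?_, ?_, ?_⟩
      · intro y hy
        rcases Finset.mem_insert.1 hy with rfl | hy
        · exact hx
        · exact hsub (hR'sub hy)
      · intro y hys
        by_cases hyx : y = x
        · subst hyx
          simp only [Finset.mem_insert, true_or, true_iff]
          intro h
          rcases h with h | h
          · exact hτxx h
          · exact hτxnR' h
        · by_cases hyτx : y = τ x
          · subst hyτx
            have hτy : τ (τ x) = x := hinv x hx
            constructor
            · intro h
              rcases Finset.mem_insert.1 h with h | h
              · exact absurd h hτxx
              · exact absurd h hτxnR'
            · intro h
              exact absurd (by rw [hτy]; exact Finset.mem_insert_self x R') h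
          · have hys' : y ∈ s' := (hmem' y).2 ⟨hys, hyx, hyτx⟩
            have hτyx : τ y ≠ x := by
              intro h
              exact hyτx (by rw [← hinv y hys, h])
            constructor
            · intro h hτ
              rcases Finset.mem_insert.1 h with h | h
              · exact hyx h
              · rcases Finset.mem_insert.1 hτ with h' | h'
                · exact hτyx h'
                · exact ((hR'iff y hys').1 h) h'
            · intro h
              refine Finset.mem_insert.2 (Or.inr ?_)
              refine (hR'iff y hys').2 fun h' => h (Finset.mem_insert.2 (Or.inr h'))
      · rw [Finset.card_insert_of_notMem hxnR']
        have h1 : (s.erase x).card = s.card - 1 := Finset.card_erase_of_mem hx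
        have h2 : s'.card = (s.erase x).card - 1 :=
          Finset.card_erase_of_mem (Finset.mem_erase.2 ⟨hτxx, hτx⟩)
        have h3 : 1 ≤ (s.erase x).card :=
          Finset.card_pos.2 ⟨τ x, Finset.mem_erase.2 ⟨hτxx, hτx⟩⟩
        have h4 : 1 ≤ s.card := Finset.card_pos.2 ⟨x, hx⟩
        omega

lemma exists_reps {X : Type*} [Fintype X] [DecidableEq X] (τ : X → X)
    (hinv : ∀ x, τ (τ x) = x) (hfree : ∀ x, τ x ≠ x) :
    ∃ R : Finset X, (∀ x, x ∈ R ↔ τ x ∉ R) ∧ 2 * R.card = Fintype.card X := by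
  obtain ⟨R, -, h2, h3⟩ := exists_reps_aux τ Finset.univ
    (fun x _ => hinv x) (fun x _ => hfree x) (fun x _ => Finset.mem_univ _)
  exact ⟨R, fun x => h2 x (Finset.mem_univ x), by simpa using h3⟩

/-- Extension of a map on vertices by zero. -/
noncomputable def extM (G : FinGraph ι) (m : {v // v ∈ G.verts} → Fin d → ℝ) :
    ι → Fin d → ℝ :=
  fun a => if h : a ∈ G.verts then m ⟨a, h⟩ else 0

lemma extM_coe (G : FinGraph ι) (m : {v // v ∈ G.verts} → Fin d → ℝ) {a : ι}
    (ha : a ∈ G.verts) : extM G m a = m ⟨a, ha⟩ := dif_pos ha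

lemma extM_add (G : FinGraph ι) (m m' : {v // v ∈ G.verts} → Fin d → ℝ) (a : ι) :
    extM G (m + m') a = extM G m a + extM G m' a := by
  unfold extM; split <;> simp

lemma extM_smul (G : FinGraph ι) (c : ℝ) (m : {v // v ∈ G.verts} → Fin d → ℝ) (a : ι) :
    extM G (c • m) a = c • extM G m a := by
  unfold extM; split <;> simp

/-- The rigidity map. -/
noncomputable def PhiL (G : FinGraph ι) (p : ι → Fin d → ℝ) :
    ({v // v ∈ G.verts} → Fin d → ℝ) →ₗ[ℝ] EuclideanSpace ℝ {e // e ∈ G.edges} where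
  toFun m := WithLp.toLp 2 fun e => ∑ a ∈ e.1, ∑ b ∈ e.1, dotR (p a - p b) (extM G m a - extM G m b)
  map_add' m m' := by
    refine PiLp.ext fun e => ?_
    show (∑ a ∈ e.1, ∑ b ∈ e.1, _ : ℝ) = (∑ a ∈ e.1, ∑ b ∈ e.1, _ : ℝ) + (∑ a ∈ e.1, ∑ b ∈ e.1, _ : ℝ)
    rw [← Finset.sum_add_distrib]
    refine Finset.sum_congr rfl fun a _ => ?_
    rw [← Finset.sum_add_distrib]
    refine Finset.sum_congr rfl fun b _ => ?_
    rw [extM_add, extM_add, show extM G m a + extM G m' a - (extM G m b + extM G m' b)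
      = (extM G m a - extM G m b) + (extM G m' a - extM G m' b) by abel, dotR_add_right]
  map_smul' c m := by
    refine PiLp.ext fun e => ?_
    show (∑ a ∈ e.1, ∑ b ∈ e.1, _ : ℝ) = c * (∑ a ∈ e.1, ∑ b ∈ e.1, _ : ℝ)
    rw [Finset.mul_sum]
    refine Finset.sum_congr rfl fun a _ => ?_
    rw [Finset.mul_sum]
    refine Finset.sum_congr rfl fun b _ => ?_
    rw [extM_smul, extM_smul, ← smul_sub, dotR_smul_right]

lemma dotR_smul_left (c : ℝ) (x y : Fin d → ℝ) : dotR (c • x) y = c * dotR x y := by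
  simp only [dotR, Finset.mul_sum, Pi.smul_apply, smul_eq_mul]
  exact Finset.sum_congr rfl fun i _ => by ring

lemma PhiL_apply (G : FinGraph ι) (p : ι → Fin d → ℝ)
    (m : {v // v ∈ G.verts} → Fin d → ℝ) (e : {e // e ∈ G.edges}) :
    PhiL G p m e = ∑ a ∈ e.1, ∑ b ∈ e.1, dotR (p a - p b) (extM G m a - extM G m b) := rfl

/-- `IsStress` in a "full double sum" form. -/
lemma isStress_iff (G : FinGraph ι) (p : ι → Fin d → ℝ) (θ : Finset ι → ℝ) :
    IsStress G p θ ↔ ∀ v ∈ G.verts,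
      (∑ e ∈ G.edges, ∑ u ∈ e, (if v ∈ e then θ e • (p v - p u) else 0)) = 0 := by
  unfold IsStress
  refine forall₂_congr fun v hv => ?_
  rw [Finset.sum_filter]
  refine Eq.congr (Finset.sum_congr rfl fun e he => ?_) rfl
  by_cases h : v ∈ e
  · simp only [h, if_true]
    exact Finset.sum_erase _ (by simp)
  · simp [h]

lemma nu_image_image (G : FinGraph ι) (ν : ι → ι) (hinv : ∀ v ∈ G.verts, ν (ν v) = v)
    {e : Finset ι} (he : e ⊆ G.verts) : (e.image ν).image ν = e := by
  rw [Finset.image_image]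
  calc e.image (ν ∘ ν) = e.image id :=
        Finset.image_congr fun x hx => hinv x (he hx)
    _ = e := Finset.image_id

lemma nu_injOn (G : FinGraph ι) (ν : ι → ι) (hinv : ∀ v ∈ G.verts, ν (ν v) = v)
    {u v : ι} (hu : u ∈ G.verts) (hv : v ∈ G.verts) (h : ν u = ν v) : u = v := by
  rw [← hinv u hu, h, hinv v hv]

/-- If `ω` is a stress then so is `ω ∘ (image ν)`. -/
lemma image_stress (G : FinGraph ι) (p : ι → Fin d → ℝ) (ν : ι → ι) (hGood : G.Good)
    (hinv : ∀ v ∈ G.verts, ν (ν v) = v) (hνmem : ∀ v ∈ G.verts, ν v ∈ G.verts)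
    (hEmem : ∀ e ∈ G.edges, e.image ν ∈ G.edges)
    (hpν : ∀ v ∈ G.verts, p (ν v) = -(p v))
    (ω : Finset ι → ℝ) (hω : IsStress G p ω) :
    IsStress G p (fun f => ω (f.image ν)) := by
  rw [isStress_iff] at hω ⊢
  intro v hv
  have h0 := hω (ν v) (hνmem v hv)
  have h1 : (∑ e ∈ G.edges, ∑ u ∈ e, (if ν v ∈ e then ω e • (p (ν v) - p u) else 0))
      = - ∑ e ∈ G.edges, ∑ u ∈ e, (if v ∈ e then ω (e.image ν) • (p v - p u) else 0) := by
    rw [← Finset.sum_neg_distrib]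
    refine Finset.sum_nbij' (fun e => e.image ν) (fun e => e.image ν)
      (fun e he => hEmem e he) (fun e he => hEmem e he)
      (fun e he => nu_image_image G ν hinv (hGood e he).1)
      (fun e he => nu_image_image G ν hinv (hGood e he).1) ?_
    intro e he
    have hesub := (hGood e he).1
    have himg : (e.image ν).image ν = e := nu_image_image G ν hinv hesub
    rw [Finset.sum_image (fun x hx y hy hxy => nu_injOn G ν hinv (hesub hx) (hesub hy) hxy)]
    rw [← Finset.sum_neg_distrib]
    refine Finset.sum_congr rfl fun u hu => ?_
    have hcond : (v ∈ e.image ν) ↔ (ν v ∈ e) := by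
      constructor
      · rintro hm
        obtain ⟨w, hw, hwv⟩ := Finset.mem_image.1 hm
        have : w = ν v := by
          rw [← hinv w (hesub hw), hwv]
        rwa [← this]
      · intro hm
        refine Finset.mem_image.2 ⟨ν v, hm, hinv v hv⟩
    rw [himg]
    by_cases hc : ν v ∈ e
    · rw [if_pos hc, if_pos (hcond.2 hc)]
      have hpu : p (ν u) = -(p u) := hpν u (hesub hu)
      have hpv : p v = -(p (ν v)) := by rw [hpν v hv]; ring_nf
      rw [hpu, hpv]
      rw [show -p (ν v) - -p u = -(p (ν v) - p u) by ring, smul_neg, neg_neg]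
    · rw [if_neg hc, if_neg (fun h => hc (hcond.1 h)), neg_zero]
  rw [h1] at h0
  exact neg_eq_zero.1 h0

/-- Key duality: a stress pairs to zero against the rigidity image of any assignment. -/
lemma stress_orth (G : FinGraph ι) (p : ι → Fin d → ℝ) (hGood : G.Good)
    (θ : Finset ι → ℝ) (hθ : IsStress G p θ)
    (m : {v // v ∈ G.verts} → Fin d → ℝ) :
    ∑ e : {e // e ∈ G.edges}, PhiL G p m e * θ e.1 = 0 := by
  classical
  set q := extM G m with hq
  have key : ∀ s : Finset ι,
      (∑ a ∈ s, ∑ b ∈ s, dotR (p a - p b) (q a - q b))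
        = 2 * ∑ a ∈ s, ∑ b ∈ s, dotR (p a - p b) (q a) := by
    intro s
    have h2 : (∑ a ∈ s, ∑ b ∈ s, dotR (p a - p b) (q b))
        = - ∑ a ∈ s, ∑ b ∈ s, dotR (p a - p b) (q a) := by
      rw [Finset.sum_comm, ← Finset.sum_neg_distrib]
      refine Finset.sum_congr rfl fun a _ => ?_
      rw [← Finset.sum_neg_distrib]
      refine Finset.sum_congr rfl fun b _ => ?_
      rw [← dotR_neg_left, neg_sub]
    simp only [dotR_sub_right, Finset.sum_sub_distrib]
    rw [h2]
    ring
  have hA : (∑ e : {e // e ∈ G.edges}, PhiL G p m e * θ e.1)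
      = ∑ e ∈ G.edges, (2 * ∑ a ∈ e, ∑ b ∈ e, dotR (p a - p b) (q a)) * θ e := by
    rw [Finset.univ_eq_attach, ← Finset.sum_attach G.edges
      (fun e => (2 * ∑ a ∈ e, ∑ b ∈ e, dotR (p a - p b) (q a)) * θ e)]
    refine Finset.sum_congr rfl fun e _ => ?_
    rw [PhiL_apply, ← hq, key e.1]
  rw [hA]
  rw [isStress_iff] at hθ
  have hB : ∀ v ∈ G.verts,
      (∑ e ∈ G.edges, ∑ u ∈ e, (if v ∈ e then θ e * dotR (p v - p u) (q v) else 0)) = 0 := by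
    intro v hv
    have hzero := hθ v hv
    have heq : (∑ e ∈ G.edges, ∑ u ∈ e, (if v ∈ e then θ e * dotR (p v - p u) (q v) else 0))
        = dotR (∑ e ∈ G.edges, ∑ u ∈ e, (if v ∈ e then θ e • (p v - p u) else 0)) (q v) := by
      rw [dotR_sum_left]
      refine Finset.sum_congr rfl fun e he => ?_
      rw [dotR_sum_left]
      refine Finset.sum_congr rfl fun u hu => ?_
      by_cases hc : v ∈ e
      · rw [if_pos hc, if_pos hc, dotR_smul_left]
      · rw [if_neg hc, if_neg hc, dotR_zero_left]
    rw [heq, hzero, dotR_zero_left]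
  have hC : (∑ v ∈ G.verts, ∑ e ∈ G.edges, ∑ u ∈ e,
      (if v ∈ e then θ e * dotR (p v - p u) (q v) else 0)) = 0 :=
    Finset.sum_eq_zero hB
  rw [Finset.sum_comm] at hC
  have hD : ∀ e ∈ G.edges,
      (∑ v ∈ G.verts, ∑ u ∈ e, (if v ∈ e then θ e * dotR (p v - p u) (q v) else 0))
        = θ e * ∑ a ∈ e, ∑ b ∈ e, dotR (p a - p b) (q a) := by
    intro e he
    have hsub := (hGood e he).1
    have h1 : ∀ v, (∑ u ∈ e, (if v ∈ e then θ e * dotR (p v - p u) (q v) else 0))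
        = if v ∈ e then (∑ u ∈ e, θ e * dotR (p v - p u) (q v)) else 0 := by
      intro v
      by_cases hc : v ∈ e <;> simp [hc]
    simp only [h1]
    rw [← Finset.sum_filter, Finset.filter_mem_eq_inter, Finset.inter_eq_right.2 hsub,
      Finset.mul_sum]
    refine Finset.sum_congr rfl fun a ha => ?_
    rw [Finset.mul_sum]
  rw [Finset.sum_congr rfl hD] at hC
  calc (∑ e ∈ G.edges, (2 * ∑ a ∈ e, ∑ b ∈ e, dotR (p a - p b) (q a)) * θ e)
      = ∑ e ∈ G.edges, 2 * (θ e * ∑ a ∈ e, ∑ b ∈ e, dotR (p a - p b) (q a)) :=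
        Finset.sum_congr rfl fun e _ => by ring
    _ = 2 * ∑ e ∈ G.edges, θ e * ∑ a ∈ e, ∑ b ∈ e, dotR (p a - p b) (q a) :=
        (Finset.mul_sum _ _ _).symm
    _ = 0 := by rw [hC, mul_zero]

/-- The even assignments (`m (ν v) = m v`). -/
noncomputable def MnegS (G : FinGraph ι) (ν : ι → ι) (hνmem : ∀ v ∈ G.verts, ν v ∈ G.verts) :
    Submodule ℝ ({v // v ∈ G.verts} → Fin d → ℝ) where
  carrier := {m | ∀ v : {v // v ∈ G.verts}, m ⟨ν v.1, hνmem v.1 v.2⟩ = m v}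
  add_mem' := fun {a b} ha hb v => by
    simp only [Pi.add_apply, ha v, hb v]
  zero_mem' := fun v => rfl
  smul_mem' := fun c m hm v => by
    simp only [Pi.smul_apply, hm v]

lemma mem_MnegS {G : FinGraph ι} {ν : ι → ι} {hνmem : ∀ v ∈ G.verts, ν v ∈ G.verts}
    {m : {v // v ∈ G.verts} → Fin d → ℝ} :
    m ∈ MnegS (d := d) G ν hνmem ↔
      ∀ v : {v // v ∈ G.verts}, m ⟨ν v.1, hνmem v.1 v.2⟩ = m v := Iff.rfl

/-- The antisymmetric edge vectors (`x (ν e) = - x e`). -/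
noncomputable def WnegS (G : FinGraph ι) (ν : ι → ι)
    (hEmem : ∀ e ∈ G.edges, e.image ν ∈ G.edges) :
    Submodule ℝ (EuclideanSpace ℝ {e // e ∈ G.edges}) where
  carrier := {x | ∀ e : {e // e ∈ G.edges}, x ⟨e.1.image ν, hEmem e.1 e.2⟩ = - x e}
  add_mem' := fun {a b} ha hb e => by
    show a _ + b _ = -(a e + b e)
    rw [ha e, hb e]; ring
  zero_mem' := fun e => by show (0 : ℝ) = -(0 : ℝ); ring
  smul_mem' := fun c x hx e => by
    show c * x _ = -(c * x e)
    rw [hx e]; ring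

lemma mem_WnegS {G : FinGraph ι} {ν : ι → ι}
    {hEmem : ∀ e ∈ G.edges, e.image ν ∈ G.edges} {x : EuclideanSpace ℝ {e // e ∈ G.edges}} :
    x ∈ WnegS (ι := ι) G ν hEmem ↔
      ∀ e : {e // e ∈ G.edges}, x ⟨e.1.image ν, hEmem e.1 e.2⟩ = - x e := Iff.rfl

/-- The rigidity map takes even assignments to antisymmetric edge vectors. -/
lemma phi_nu (G : FinGraph ι) (p : ι → Fin d → ℝ) (ν : ι → ι) (hGood : G.Good)
    (hinv : ∀ v ∈ G.verts, ν (ν v) = v) (hνmem : ∀ v ∈ G.verts, ν v ∈ G.verts)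
    (hEmem : ∀ e ∈ G.edges, e.image ν ∈ G.edges)
    (hpν : ∀ v ∈ G.verts, p (ν v) = -(p v))
    (m : {v // v ∈ G.verts} → Fin d → ℝ) (hm : m ∈ MnegS (d := d) G ν hνmem)
    (e : {e // e ∈ G.edges}) :
    PhiL G p m ⟨e.1.image ν, hEmem e.1 e.2⟩ = - PhiL G p m e := by
  have hsub := (hGood e.1 e.2).1
  rw [PhiL_apply, PhiL_apply]
  show (∑ a ∈ e.1.image ν, ∑ b ∈ e.1.image ν, dotR (p a - p b) (extM G m a - extM G m b)) = _
  rw [Finset.sum_image (fun x hx y hy hxy => nu_injOn G ν hinv (hsub hx) (hsub hy) hxy)]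
  rw [← Finset.sum_neg_distrib]
  refine Finset.sum_congr rfl fun a ha => ?_
  rw [Finset.sum_image (fun x hx y hy hxy => nu_injOn G ν hinv (hsub hx) (hsub hy) hxy)]
  rw [← Finset.sum_neg_distrib]
  refine Finset.sum_congr rfl fun b hb => ?_
  have hav := hsub ha
  have hbv := hsub hb
  have hqa : extM G m (ν a) = extM G m a := by
    rw [extM_coe G m (hνmem a hav), extM_coe G m hav]
    exact hm ⟨a, hav⟩
  have hqb : extM G m (ν b) = extM G m b := by
    rw [extM_coe G m (hνmem b hbv), extM_coe G m hbv]
    exact hm ⟨b, hbv⟩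
  rw [hqa, hqb, hpν a hav, hpν b hbv,
    show -p a - -p b = -(p a - p b) by ring, dotR_neg_left]

/-- If the rigidity map vanishes, the zero-extension is an infinitesimal motion. -/
lemma motion_of_phi_zero (G : FinGraph ι) (p : ι → Fin d → ℝ) (hGood : G.Good)
    (m : {v // v ∈ G.verts} → Fin d → ℝ) (hf : PhiL G p m = 0) :
    IsMotion G p (extM G m) := by
  intro e he u hu v hv
  obtain ⟨hsub, hcard⟩ := hGood e he
  have h0 : PhiL G p m ⟨e, he⟩ = 0 := by rw [hf]; rfl
  rw [PhiL_apply] at h0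
  obtain ⟨x, y, hxy, rfl⟩ := Finset.card_eq_two.1 hcard
  have hxny : x ∉ ({y} : Finset ι) := by simp [hxy]
  rw [Finset.sum_insert hxny, Finset.sum_singleton, Finset.sum_insert hxny,
    Finset.sum_insert hxny, Finset.sum_singleton, Finset.sum_singleton] at h0
  simp only [sub_self, dotR_zero_left] at h0
  have hsymm : dotR (p y - p x) (extM G m y - extM G m x)
      = dotR (p x - p y) (extM G m x - extM G m y) := by
    rw [← neg_sub (p x) (p y), ← neg_sub (extM G m x) (extM G m y), dotR_neg_neg]
  rw [hsymm] at h0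
  have hkey : dotR (p x - p y) (extM G m x - extM G m y) = 0 := by linarith
  have hgen : ∀ a ∈ ({x, y} : Finset ι), ∀ b ∈ ({x, y} : Finset ι),
      dotR (p a - p b) (extM G m a - extM G m b) = 0 := by
    intro a ha b hb
    have ha' : a = x ∨ a = y := by simpa using ha
    have hb' : b = x ∨ b = y := by simpa using hb
    rcases ha' with rfl | rfl <;> rcases hb' with rfl | rfl
    · simp [sub_self, dotR_zero_right]
    · exact hkey
    · rw [hsymm]; exact hkey
    · simp [sub_self, dotR_zero_right]
  exact hgen u hu v hv

end Stmt3Aux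

set_option maxHeartbeats 1000000 in
set_option synthInstance.maxHeartbeats 200000 in
/-- If `d ≥ 3` and `(G, p)` is an infinitesimally rigid, affinely spanning
cs `d`-framework with `f₁(G) - d f₀(G) + C(d+1,2) = C(d,2) - d`, then every stress on
`(G, p)` is symmetric: `ω_e = ω_{-e}` for every edge `e`. -/
theorem stmt3 {ι : Type} {d : ℕ} (hd : 3 ≤ d) (G : FinGraph ι) (p : ι → Fin d → ℝ)
    (ν : ι → ι) (hGood : G.Good) (hcs : IsCSFramework G p ν)
    (hrig : IsInfRigid d G p)
    (hspan : affineSpan ℝ (p '' (G.verts : Set ι)) = ⊤)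
    (hg2 : (G.edges.card : ℤ) - (d : ℤ) * (G.verts.card : ℤ) + ((d + 1).choose 2 : ℤ) =
      (d.choose 2 : ℤ) - (d : ℤ)) :
    ∀ ω : Finset ι → ℝ, IsStress G p ω → ∀ e ∈ G.edges, ω (e.image ν) = ω e := by
  classical
  obtain ⟨hinv, hνmem, hνne, hEmem, hEne, hpν⟩ := hcs
  intro ω hω e₀ he₀
  -- linear spanning
  have hspan' : ∀ x : Fin d → ℝ, x ∈ Submodule.span ℝ (p '' (G.verts : Set ι)) := by
    intro x
    have hle : affineSpan ℝ (p '' (G.verts : Set ι)) ≤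
        (Submodule.span ℝ (p '' (G.verts : Set ι))).toAffineSubspace :=
      affineSpan_le.2 Submodule.subset_span
    rw [hspan] at hle
    exact Submodule.mem_toAffineSubspace.1 (hle (AffineSubspace.mem_top ℝ _ x))
  -- the vertex set is nonempty
  have hVne : G.verts.Nonempty := by
    rcases G.verts.eq_empty_or_nonempty with h | h
    · exfalso
      rw [h] at hspan
      simp only [Finset.coe_empty, Set.image_empty, AffineSubspace.span_empty] at hspan
      exact AffineSubspace.bot_ne_top (k := ℝ) (P := Fin d → ℝ) (V := Fin d → ℝ) hspan
    · exact h
  obtain ⟨v₀, hv₀⟩ := hVne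
  -- involutions on vertex and edge subtypes
  set τV : {v // v ∈ G.verts} → {v // v ∈ G.verts} :=
    (fun v => ⟨ν v.1, hνmem v.1 v.2⟩) with hτV
  have hτVinv : ∀ v, τV (τV v) = v := fun v => Subtype.ext (hinv v.1 v.2)
  have hτVfree : ∀ v, τV v ≠ v := fun v h => hνne v.1 v.2 (congrArg Subtype.val h)
  set τE : {e // e ∈ G.edges} → {e // e ∈ G.edges} :=
    (fun e => ⟨e.1.image ν, hEmem e.1 e.2⟩) with hτE
  have hτEinv : ∀ e, τE (τE e) = e :=
    fun e => Subtype.ext (nu_image_image G ν hinv (hGood e.1 e.2).1)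
  have hτEfree : ∀ e, τE e ≠ e := fun e h => hEne e.1 e.2 (congrArg Subtype.val h)
  obtain ⟨RE, hRE, hREcard⟩ := exists_reps τE hτEinv hτEfree
  obtain ⟨RV, hRV, hRVcard⟩ := exists_reps τV hτVinv hτVfree
  -- the restricted rigidity map
  have hrange : ∀ mm : ↥(MnegS (d := d) G ν hνmem),
      ((PhiL G p).comp (MnegS (d := d) G ν hνmem).subtype) mm ∈ WnegS (ι := ι) G ν hEmem :=
    fun mm e => phi_nu G p ν hGood hinv hνmem hEmem hpν mm.1 mm.2 e
  set Φ' : ↥(MnegS (d := d) G ν hνmem) →ₗ[ℝ] ↥(WnegS (ι := ι) G ν hEmem) :=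
    LinearMap.codRestrict _ ((PhiL G p).comp (MnegS (d := d) G ν hνmem).subtype) hrange
    with hΦ'
  set K := LinearMap.range Φ' with hK
  -- kernel bound
  have hker : Module.finrank ℝ ↥(LinearMap.ker Φ') ≤ d := by
    have hconst : ∀ mm : ↥(LinearMap.ker Φ'), ∀ w ∈ G.verts,
        extM G mm.1.1 w = extM G mm.1.1 v₀ := by
      intro mm w hw
      have hphi0 : PhiL G p mm.1.1 = 0 := by
        have h1 := mm.2
        rw [LinearMap.mem_ker] at h1
        exact congrArg Subtype.val h1
      obtain ⟨A, b, hAskew, hAb⟩ := hrig (extM G mm.1.1)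
        (motion_of_phi_zero G p hGood mm.1.1 hphi0)
      have hgen : ∀ u ∈ G.verts, A.mulVec (p u) = 0 := by
        intro u hu
        have h1 : extM G mm.1.1 (ν u) = extM G mm.1.1 u := by
          rw [extM_coe G _ (hνmem u hu), extM_coe G _ hu]
          exact mm.1.2 ⟨u, hu⟩
        rw [hAb u hu, hAb (ν u) (hνmem u hu), hpν u hu, Matrix.mulVec_neg] at h1
        have h2 : -(A.mulVec (p u)) = A.mulVec (p u) := add_right_cancel h1
        have h3 : A.mulVec (p u) + A.mulVec (p u) = 0 := by
          nth_rewrite 1 [← h2]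
          exact neg_add_cancel _
        have h4 : (2 : ℝ) • A.mulVec (p u) = 0 := by
          rw [two_smul]; exact h3
        rcases smul_eq_zero.1 h4 with h5 | h5
        · norm_num at h5
        · exact h5
      have hA0 : ∀ x : Fin d → ℝ, A.mulVec x = 0 := by
        intro x
        have hle2 : Submodule.span ℝ (p '' (G.verts : Set ι)) ≤
            LinearMap.ker A.mulVecLin := by
          rw [Submodule.span_le]
          rintro _ ⟨u, hu, rfl⟩
          rw [SetLike.mem_coe, LinearMap.mem_ker, Matrix.mulVecLin_apply]
          exact hgen u (Finset.mem_coe.1 hu)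
        have h6 := hle2 (hspan' x)
        rwa [LinearMap.mem_ker, Matrix.mulVecLin_apply] at h6
      rw [hAb w hw, hAb v₀ hv₀, hA0 (p w), hA0 (p v₀)]
    -- evaluation at `v₀` is injective on the kernel
    set ε : ↥(LinearMap.ker Φ') →ₗ[ℝ] (Fin d → ℝ) :=
      (LinearMap.proj (⟨v₀, hv₀⟩ : {v // v ∈ G.verts})).comp
        ((MnegS (d := d) G ν hνmem).subtype.comp (LinearMap.ker Φ').subtype) with hε
    have hkerε : LinearMap.ker ε = ⊥ := by
      rw [Submodule.eq_bot_iff]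
      intro mm hmm
      rw [LinearMap.mem_ker] at hmm
      have hval : mm.1.1 ⟨v₀, hv₀⟩ = 0 := hmm
      apply Subtype.ext
      apply Subtype.ext
      funext w
      have h1 : extM G mm.1.1 w.1 = extM G mm.1.1 v₀ := hconst mm w.1 w.2
      rw [extM_coe G _ w.2, extM_coe G _ hv₀] at h1
      calc mm.1.1 w = mm.1.1 ⟨w.1, w.2⟩ := rfl
        _ = mm.1.1 ⟨v₀, hv₀⟩ := h1
        _ = 0 := hval
        _ = (0 : {v // v ∈ G.verts} → Fin d → ℝ) w := rfl
    have hinj : Function.Injective ε := fun a b hab => by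
      have hab' : a - b ∈ LinearMap.ker ε := by
        rw [LinearMap.mem_ker]
        exact (ε.map_sub a b).trans (by rw [hab, sub_self])
      rw [hkerε, Submodule.mem_bot] at hab'
      exact sub_eq_zero.1 hab'
    calc Module.finrank ℝ ↥(LinearMap.ker Φ') ≤ Module.finrank ℝ (Fin d → ℝ) :=
          LinearMap.finrank_le_finrank_of_injective hinj
      _ = d := by rw [Module.finrank_pi]; exact Fintype.card_fin d
  -- dimension bound for the antisymmetric edge space
  have hW : Module.finrank ℝ ↥(WnegS (ι := ι) G ν hEmem) ≤ RE.card := by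
    set ρ : ↥(WnegS (ι := ι) G ν hEmem) →ₗ[ℝ] ({r // r ∈ RE} → ℝ) :=
      { toFun := fun x r => x.1 r.1
        map_add' := fun x y => rfl
        map_smul' := fun c x => rfl } with hρ
    have hkerρ : LinearMap.ker ρ = ⊥ := by
      rw [Submodule.eq_bot_iff]
      intro x hx
      rw [LinearMap.mem_ker] at hx
      apply Subtype.ext
      refine PiLp.ext fun e => ?_
      have hzero : ∀ r ∈ RE, x.1 r = 0 := fun r hr => congrFun hx ⟨r, hr⟩
      by_cases he : e ∈ RE
      · exact hzero e he
      · have hte : τE e ∈ RE := by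
          by_contra h2
          exact he ((hRE e).2 h2)
        have h3 : x.1 (τE e) = - x.1 e := x.2 e
        have h4 : x.1 (τE e) = 0 := hzero _ hte
        rw [h4] at h3
        have := h3.symm
        rw [neg_eq_zero] at this
        exact this
    have hinjρ : Function.Injective ρ := LinearMap.ker_eq_bot.1 hkerρ
    calc Module.finrank ℝ ↥(WnegS (ι := ι) G ν hEmem)
        ≤ Module.finrank ℝ ({r // r ∈ RE} → ℝ) :=
          LinearMap.finrank_le_finrank_of_injective hinjρ
      _ = RE.card := by rw [Module.finrank_pi]; exact Fintype.card_coe RE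
  -- dimension bound for the even assignment space
  have hM : d * RV.card ≤ Module.finrank ℝ ↥(MnegS (d := d) G ν hνmem) := by
    set π : ↥(MnegS (d := d) G ν hνmem) →ₗ[ℝ] ({r // r ∈ RV} → Fin d → ℝ) :=
      { toFun := fun m r => m.1 r.1
        map_add' := fun x y => rfl
        map_smul' := fun c x => rfl } with hπ
    have hsurj : Function.Surjective π := by
      intro y
      have hy0 : ∀ v : {v // v ∈ G.verts}, True := fun _ => trivial
      refine ⟨⟨fun v => if v ∈ RV then (if h : v ∈ RV then y ⟨v, h⟩ else 0)
        else (if h : τV v ∈ RV then y ⟨τV v, h⟩ else 0), ?_⟩, ?_⟩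
      · intro v
        show (if τV v ∈ RV then (if h : τV v ∈ RV then y ⟨τV v, h⟩ else 0)
          else (if h : τV (τV v) ∈ RV then y ⟨τV (τV v), h⟩ else 0))
          = (if v ∈ RV then (if h : v ∈ RV then y ⟨v, h⟩ else 0)
          else (if h : τV v ∈ RV then y ⟨τV v, h⟩ else 0))
        by_cases h : v ∈ RV
        · have h1 : τV v ∉ RV := (hRV v).1 h
          rw [if_neg h1, if_pos h, hτVinv v]
        · have h1 : τV v ∈ RV := by
            by_contra h2
            exact h ((hRV v).2 h2)
          rw [if_pos h1, if_neg h]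
      · funext r
        show (if r.1 ∈ RV then (if h : r.1 ∈ RV then y ⟨r.1, h⟩ else 0)
          else (if h : τV r.1 ∈ RV then y ⟨τV r.1, h⟩ else 0)) = y r
        rw [if_pos r.2, dif_pos r.2]
    have hrn2 := LinearMap.finrank_range_add_finrank_ker π
    rw [LinearMap.range_eq_top.2 hsurj, finrank_top] at hrn2
    have hcod : Module.finrank ℝ ({r // r ∈ RV} → Fin d → ℝ) = d * RV.card := by
      rw [Module.finrank_pi_fintype]
      simp only [Module.finrank_pi, Fintype.card_fin, Finset.sum_const, smul_eq_mul,
        Finset.card_univ, Fintype.card_coe]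
      ring
    rw [hcod] at hrn2
    exact Nat.le.intro hrn2
  -- rank-nullity and orthogonal complement
  have hrn : Module.finrank ℝ ↥K + Module.finrank ℝ ↥(LinearMap.ker Φ')
      = Module.finrank ℝ ↥(MnegS (d := d) G ν hνmem) := by
    rw [hK]
    exact LinearMap.finrank_range_add_finrank_ker Φ'
  have horth := Submodule.finrank_add_finrank_orthogonal K
  -- counting
  have hcard2 : 2 * RE.card = G.edges.card := hREcard.trans (Fintype.card_coe _)
  have hvcard2 : 2 * RV.card = G.verts.card := hRVcard.trans (Fintype.card_coe _)
  have hmn : G.edges.card + 2 * d = d * G.verts.card := by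
    have h3 : (d + 1).choose 2 = d.choose 1 + d.choose 2 := Nat.choose_succ_succ d 1
    have h2 : ((d + 1).choose 2 : ℤ) = (d.choose 2 : ℤ) + d := by
      rw [h3, Nat.choose_one_right]; push_cast; ring
    have h4 : (G.edges.card : ℤ) + 2 * d = d * G.verts.card := by linarith [hg2, h2]
    exact_mod_cast h4
  have e3 : RE.card + d = d * RV.card := by
    have h5 : 2 * (RE.card + d) = 2 * (d * RV.card) := by
      calc 2 * (RE.card + d) = 2 * RE.card + 2 * d := by ring
        _ = G.edges.card + 2 * d := by rw [hcard2]
        _ = d * G.verts.card := hmn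
        _ = d * (2 * RV.card) := by rw [hvcard2]
        _ = 2 * (d * RV.card) := by ring
    exact Nat.eq_of_mul_eq_mul_left (by norm_num) h5
  have hfinal : Module.finrank ℝ ↥(Kᗮ) = 0 := by
    generalize hP : d * RV.card = P at e3 hM
    omega
  have hbot : (Kᗮ : Submodule ℝ ↥(WnegS (ι := ι) G ν hEmem)) = ⊥ :=
    Submodule.finrank_eq_zero.1 hfinal
  -- the antisymmetric part of the stress
  set ηF : EuclideanSpace ℝ {e // e ∈ G.edges} :=
    WithLp.toLp 2 (fun e => ω e.1 - ω (e.1.image ν)) with hηF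
  have hηW : ηF ∈ WnegS (ι := ι) G ν hEmem := by
    intro e
    show ω (e.1.image ν) - ω ((e.1.image ν).image ν) = -(ω e.1 - ω (e.1.image ν))
    rw [nu_image_image G ν hinv (hGood e.1 e.2).1]; ring
  have hηstress : IsStress G p (fun f => ω f - ω (f.image ν)) := by
    have h2 := image_stress G p ν hGood hinv hνmem hEmem hpν ω hω
    intro v hv
    have e1 := hω v hv
    have e2 := h2 v hv
    simp only [sub_smul, Finset.sum_sub_distrib]
    rw [e1, e2, sub_zero]
  have hηmem : (⟨ηF, hηW⟩ : ↥(WnegS (ι := ι) G ν hEmem)) ∈ Kᗮ := by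
    rw [Submodule.mem_orthogonal]
    rintro u hu
    rw [hK, LinearMap.mem_range] at hu
    obtain ⟨mm, rfl⟩ := hu
    rw [Submodule.coe_inner]
    have hcoe : ((Φ' mm : ↥(WnegS (ι := ι) G ν hEmem)) : EuclideanSpace ℝ {e // e ∈ G.edges})
        = PhiL G p mm.1 := rfl
    rw [hcoe, PiLp.inner_apply]
    simp only [RCLike.inner_apply', conj_trivial]
    exact stress_orth G p hGood _ hηstress mm.1
  rw [hbot] at hηmem
  have hzero : ηF = 0 :=
    congrArg Subtype.val ((Submodule.mem_bot ℝ).1 hηmem)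
  have hfin := congrArg (fun x => x ⟨e₀, he₀⟩) hzero
  have hfin' : ω e₀ - ω (e₀.image ν) = 0 := hfin
  linarith
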